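/- Let β ∈ (0,1), l_k = 4^k, γ_k = exp(4^{βk}), ρ_k = 1 - 1/l_k + iγ_k. Then ∑_{k=K+1}^∞ |log(G(l_k(1-ρ_k)) G(l_k(1-conj ρ_k)))| ≪ ∑_{k=K+1}^∞ 1/(l_k γ_k) ≪ exp(-4^{β(K+1)}) for all K ≥ 1. -/

import Mathlib

open Complex

/-- `G(z) = 1 - (e^{-z} - e^{-2z})/z` for `z ≠ 0`, with `G(0) = 0`. -/
noncomputable def G (z : ℂ) : ℂ :=
  if z = 0 then 0 else 1 - (Complex.exp (-z) - Complex.exp (-2 * z)) / z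

/-- `γ_k = exp(4^{βk})`. -/
noncomputable def γ (β : ℝ) (k : ℕ) : ℝ := Real.exp ((4:ℝ) ^ (β * k))

/-- `ρ_k = 1 - 4^{-k} + i γ_k`. -/
noncomputable def ρ (β : ℝ) (k : ℕ) : ℂ := 1 - 1 / 4 ^ k + Complex.I * (γ β k : ℝ)

lemma exp_sum_lt_one : Real.exp (-1) + Real.exp (-2) < 1 := by
  have h1 : Real.exp 1 > 2.7182818283 := Real.exp_one_gt_d9
  have h2 : Real.exp (-1) * Real.exp 1 = 1 := by
    rw [← Real.exp_add]; norm_num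
  have h3 : Real.exp (-2) < Real.exp (-1) := Real.exp_lt_exp.mpr (by norm_num)
  have h4 : 0 < Real.exp (-1) := Real.exp_pos _
  nlinarith

lemma G_sub_one_bound {t : ℝ} (ht : 1 ≤ |t|) : ‖G (1 + Complex.I * t) - 1‖ ≤ 1 / |t| := by
  have hz : (1 + Complex.I * (t:ℂ)) ≠ 0 := by
    intro h
    have := congrArg Complex.re h
    simp at this
  rw [G, if_neg hz]
  have h1 : (1 : ℂ) - (Complex.exp (-(1 + Complex.I * t)) -
      Complex.exp (-2 * (1 + Complex.I * t))) / (1 + Complex.I * t) - 1 =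
      -((Complex.exp (-(1 + Complex.I * t)) -
      Complex.exp (-2 * (1 + Complex.I * t))) / (1 + Complex.I * t)) := by ring
  rw [h1, norm_neg, norm_div]
  have hnum : ‖Complex.exp (-(1 + Complex.I * t)) -
      Complex.exp (-2 * (1 + Complex.I * t))‖ ≤ 1 := by
    refine (norm_sub_le _ _).trans ?_
    rw [Complex.norm_exp, Complex.norm_exp]
    have e1 : (-(1 + Complex.I * (t:ℂ))).re = -1 := by simp
    have e2 : (-2 * (1 + Complex.I * (t:ℂ))).re = -2 := by simp
    rw [e1, e2]
    linarith [exp_sum_lt_one]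
  have hden : |t| ≤ ‖(1 + Complex.I * (t:ℂ))‖ := by
    have him : (1 + Complex.I * (t:ℂ)).im = t := by simp
    calc |t| = |(1 + Complex.I * (t:ℂ)).im| := by rw [him]
    _ ≤ ‖(1 + Complex.I * (t:ℂ))‖ := Complex.abs_im_le_norm _
    _ = ‖(1 + Complex.I * (t:ℂ))‖ := rfl
  have ht0 : (0:ℝ) < |t| := lt_of_lt_of_le one_pos ht
  exact div_le_div₀ one_pos.le hnum ht0 hden

lemma log_bound {t : ℝ} (ht : 32 ≤ t) :
    ‖Complex.log (G (1 - Complex.I * t) * G (1 + Complex.I * t))‖ ≤ 6 * (1 / t) := by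
  have ht0 : (0:ℝ) < t := by linarith
  have habs : (1:ℝ) ≤ |t| := by rw [abs_of_pos ht0]; linarith
  have habs' : (1:ℝ) ≤ |(-t)| := by rw [abs_neg]; exact habs
  have ha := G_sub_one_bound habs'
  have hb := G_sub_one_bound habs
  rw [abs_neg, abs_of_pos ht0] at ha
  rw [abs_of_pos ht0] at hb
  have hrw : (1:ℂ) - Complex.I * t = 1 + Complex.I * ((-t : ℝ) : ℂ) := by push_cast; ring
  rw [hrw]
  set a := G (1 + Complex.I * ((-t:ℝ):ℂ)) - 1 with hadef
  set b := G (1 + Complex.I * (t:ℝ)) - 1 with hbdef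
  have hprod : G (1 + Complex.I * ((-t:ℝ):ℂ)) * G (1 + Complex.I * (t:ℝ))
      = 1 + (a + b + a * b) := by rw [hadef, hbdef]; ring
  rw [hprod]
  have hub : ‖a + b + a * b‖ ≤ 3 / t := by
    have h1 : ‖a * b‖ ≤ (1/t) * (1/t) := by
      rw [norm_mul]; exact mul_le_mul ha hb (norm_nonneg _) (by positivity)
    have h2 : (1/t) * (1/t) ≤ 1/t := by
      rw [div_mul_div_comm, div_le_div_iff₀ (by positivity) ht0]
      nlinarith
    calc ‖a + b + a * b‖ ≤ ‖a‖ + ‖b‖ + ‖a * b‖ := by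
          exact (norm_add_le _ _).trans (by linarith [norm_add_le a b, norm_nonneg (a*b)])
      _ ≤ 1/t + 1/t + 1/t := by linarith
      _ = 3 / t := by ring
  have hhalf : ‖a + b + a * b‖ ≤ 1 / 2 := by
    refine hub.trans ?_
    rw [div_le_div_iff₀ ht0 two_pos]; linarith
  calc ‖Complex.log (1 + (a + b + a * b))‖ ≤ (3/2) * ‖a + b + a*b‖ :=
        Complex.norm_log_one_add_half_le_self hhalf
    _ ≤ (3/2) * (3/t) := by linarith [hub]
    _ ≤ 6 * (1/t) := by
        rw [mul_one_div]
        have h9 : (3:ℝ)/2 * (3/t) = (9/2)/t := by ring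
        rw [h9]
        gcongr; norm_num

lemma arg1 (β : ℝ) (n : ℕ) :
    (4:ℂ) ^ n * (1 - ρ β n) = 1 - Complex.I * (((4:ℝ) ^ n * γ β n : ℝ) : ℂ) := by
  have h4 : ((4:ℂ) ^ n) ≠ 0 := pow_ne_zero _ (by norm_num)
  rw [ρ]
  push_cast
  field_simp
  ring

lemma arg2 (β : ℝ) (n : ℕ) :
    (4:ℂ) ^ n * (1 - (starRingEnd ℂ) (ρ β n)) = 1 + Complex.I * (((4:ℝ) ^ n * γ β n : ℝ) : ℂ) := by
  have h4 : ((4:ℂ) ^ n) ≠ 0 := pow_ne_zero _ (by norm_num)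
  rw [ρ]
  simp only [map_add, map_sub, map_one, map_div₀, map_pow, map_mul, Complex.conj_I,
    Complex.conj_ofReal, map_ofNat]
  push_cast
  field_simp
  ring

/-- `∑_{k>K} |log(G(l_k(1-ρ_k)) G(l_k(1-ρ̄_k)))| ≪ ∑_{k>K} 1/(l_k γ_k) ≪ exp(-4^{β(K+1)})`. -/
theorem tail_bound (β : ℝ) (hβ : β ∈ Set.Ioo (0:ℝ) 1) :
    ∃ C > 0, ∀ K : ℕ, 1 ≤ K →
      (∑' k : ℕ, ‖Complex.log
          (G ((4:ℂ) ^ (K + 1 + k) * (1 - ρ β (K + 1 + k))) *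
            G ((4:ℂ) ^ (K + 1 + k) * (1 - (starRingEnd ℂ) (ρ β (K + 1 + k)))))‖)
          ≤ C * ∑' k : ℕ, 1 / ((4:ℝ) ^ (K + 1 + k) * γ β (K + 1 + k)) ∧
      (∑' k : ℕ, 1 / ((4:ℝ) ^ (K + 1 + k) * γ β (K + 1 + k)))
          ≤ C * Real.exp (-(4:ℝ) ^ (β * (K + 1))) := by
  obtain ⟨hb0, hb1⟩ := hβ
  refine ⟨6, by norm_num, fun K hK => ?_⟩
  set E := Real.exp (-(4:ℝ) ^ (β * (K + 1))) with hE
  have hEpos : 0 < E := Real.exp_pos _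
  set f : ℕ → ℝ := fun k => 1 / ((4:ℝ) ^ (K + 1 + k) * γ β (K + 1 + k)) with hf
  have hγpos : ∀ n : ℕ, 0 < γ β n := fun n => Real.exp_pos _
  have ht32 : ∀ k : ℕ, (32:ℝ) ≤ (4:ℝ) ^ (K + 1 + k) * γ β (K + 1 + k) := by
    intro k
    have h1 : (16:ℝ) ≤ (4:ℝ) ^ (K + 1 + k) := by
      calc (16:ℝ) = 4 ^ 2 := by norm_num
        _ ≤ 4 ^ (K + 1 + k) := pow_le_pow_right₀ (by norm_num) (by omega)
    have h2 : (2:ℝ) ≤ γ β (K + 1 + k) := by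
      rw [γ]
      have hx : (1:ℝ) ≤ (4:ℝ) ^ (β * (K + 1 + k : ℕ)) := by
        rw [show (1:ℝ) = (4:ℝ) ^ (0:ℝ) by rw [Real.rpow_zero]]
        apply Real.rpow_le_rpow_of_exponent_le (by norm_num)
        positivity
      calc (2:ℝ) ≤ Real.exp 1 := by linarith [Real.add_one_le_exp 1]
        _ ≤ Real.exp _ := Real.exp_le_exp.mpr hx
    nlinarith
  have hfle : ∀ k : ℕ, f k ≤ E * (1/4:ℝ) ^ (K + 1 + k) := by
    intro k
    have hg : Real.exp ((4:ℝ) ^ (β * (K + 1))) ≤ γ β (K + 1 + k) := by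
      rw [γ]
      apply Real.exp_le_exp.mpr
      apply Real.rpow_le_rpow_of_exponent_le (by norm_num)
      have : ((K:ℝ) + 1) ≤ ((K + 1 + k : ℕ) : ℝ) := by push_cast; linarith [Nat.cast_nonneg (α := ℝ) k]
      calc β * (K + 1) = β * ((K:ℝ) + 1) := by push_cast; ring
        _ ≤ β * ((K + 1 + k : ℕ) : ℝ) := by
            exact mul_le_mul_of_nonneg_left this hb0.le
    have heq : E * (1/4:ℝ) ^ (K + 1 + k)
        = 1 / ((4:ℝ) ^ (K + 1 + k) * Real.exp ((4:ℝ) ^ (β * (K + 1)))) := by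
      rw [hE, Real.exp_neg, one_div_pow]
      field_simp
    rw [hf, heq]
    apply one_div_le_one_div_of_le (by positivity)
    exact mul_le_mul_of_nonneg_left hg (by positivity)
  have hg_summable : Summable (fun k : ℕ => E * (1/4:ℝ) ^ (K + 1 + k)) := by
    apply Summable.mul_left
    simp_rw [pow_add]
    exact (summable_geometric_of_lt_one (by norm_num) (by norm_num)).mul_left _
  have hf_nonneg : ∀ k : ℕ, 0 ≤ f k := fun k =>
    one_div_nonneg.mpr (mul_nonneg (by positivity) (hγpos _).le)
  have hf_summable : Summable f :=
    Summable.of_nonneg_of_le hf_nonneg hfle hg_summable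
  constructor
  · -- first inequality
    have hterm : ∀ k : ℕ, ‖Complex.log
        (G ((4:ℂ) ^ (K + 1 + k) * (1 - ρ β (K + 1 + k))) *
          G ((4:ℂ) ^ (K + 1 + k) * (1 - (starRingEnd ℂ) (ρ β (K + 1 + k)))))‖
        ≤ 6 * f k := by
      intro k
      rw [arg1, arg2, hf]
      exact log_bound (ht32 k)
    have hlog_summable : Summable (fun k : ℕ => ‖Complex.log
        (G ((4:ℂ) ^ (K + 1 + k) * (1 - ρ β (K + 1 + k))) *
          G ((4:ℂ) ^ (K + 1 + k) * (1 - (starRingEnd ℂ) (ρ β (K + 1 + k)))))‖) :=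
      Summable.of_nonneg_of_le (fun k => norm_nonneg _) hterm (hf_summable.mul_left 6)
    calc (∑' k : ℕ, ‖Complex.log
          (G ((4:ℂ) ^ (K + 1 + k) * (1 - ρ β (K + 1 + k))) *
            G ((4:ℂ) ^ (K + 1 + k) * (1 - (starRingEnd ℂ) (ρ β (K + 1 + k)))))‖)
        ≤ ∑' k : ℕ, 6 * f k :=
          Summable.tsum_le_tsum hterm hlog_summable (hf_summable.mul_left 6)
      _ = 6 * ∑' k : ℕ, f k := tsum_mul_left
  · -- second inequality
    have h1 : (∑' k : ℕ, f k) ≤ ∑' k : ℕ, E * (1/4:ℝ) ^ (K + 1 + k) :=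
      Summable.tsum_le_tsum hfle hf_summable hg_summable
    have h2 : (∑' k : ℕ, E * (1/4:ℝ) ^ (K + 1 + k))
        = E * (1/4:ℝ) ^ (K + 1) * (1 / (1 - 1/4)) := by
      have : ∀ k : ℕ, E * (1/4:ℝ) ^ (K + 1 + k) = (E * (1/4:ℝ) ^ (K + 1)) * (1/4:ℝ) ^ k := by
        intro k; rw [pow_add]; ring
      simp_rw [this]
      rw [tsum_mul_left, tsum_geometric_of_lt_one (by norm_num) (by norm_num)]
      norm_num
    have hpow : ((1:ℝ)/4) ^ (K + 1) ≤ 1 := pow_le_one₀ (by norm_num) (by norm_num)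
    calc (∑' k : ℕ, f k) ≤ E * (1/4:ℝ) ^ (K + 1) * (1 / (1 - 1/4)) := by rw [← h2]; exact h1
      _ ≤ 6 * E := by
          have hpow0 : (0:ℝ) ≤ ((1:ℝ)/4) ^ (K + 1) := by positivity
          nlinarith
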